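/- Let m ∈ ℕ and let (a_{j,l,k}), indexed by triples (j,l,k) ∈ ℕ³ with j − l + k = m, be any family of complex numbers satisfying a_{j,l,k} = a_{k,l,j} and sup |a_{j,l,k}| ≤ 1/2. Define, for a sequence v, the sequence X(v) with n-th entry X(v)(n) = −2i·Σ over (k,l) ∈ ℕ² with k − l + n = m of conj(a_{k,l,n})·conj(v_k)·v_l − i·Σ over (k,l) ∈ ℕ² with k + l = m + n of a_{k,n,l}·v_k·v_l. Then for every s > 1/2 there exists a constant C_{m,s} > 0 such that for all v, h ∈ H^s₊: ‖X(v)‖_{H^s} ≤ C_{m,s}‖v‖_{H^s}², and ‖X(v) − X(h)‖_{H^s} ≤ C_{m,s}(‖v‖_{H^s} + ‖h‖_{H^s})·‖v − h‖_{H^s}. -/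

import Mathlib

/-- Squared `H^s` norm of a sequence of Fourier coefficients. -/
noncomputable def hsNormSq (s : ℝ) (v : ℕ → ℂ) : ℝ :=
  ∑' k : ℕ, (1 + (k : ℝ) ^ 2) ^ s * ‖v k‖ ^ 2

/-- `H^s` norm of a sequence of Fourier coefficients. -/
noncomputable def hsNorm (s : ℝ) (v : ℕ → ℂ) : ℝ :=
  Real.sqrt (hsNormSq s v)

/-- Membership in `H^s₊`. -/
def InHs (s : ℝ) (v : ℕ → ℂ) : Prop :=
  Summable fun k : ℕ => (1 + (k : ℝ) ^ 2) ^ s * ‖v k‖ ^ 2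

/-- The `k`-th Fourier coefficient of `Π(|v|²v)`:
the sum over `k₁ - k₂ + k₃ = k` of `v_{k₁} * conj v_{k₂} * v_{k₃}`. -/
noncomputable def cubicTerm (v : ℕ → ℂ) (k : ℕ) : ℂ :=
  ∑' p : ℕ × ℕ × ℕ,
    if p.1 + p.2.2 = k + p.2.1 then v p.1 * (starRingEnd ℂ) (v p.2.1) * v p.2.2 else 0

/-- Absolute convergence of the sum defining `cubicTerm v k`. -/
def CubicSummable (v : ℕ → ℂ) (k : ℕ) : Prop :=
  Summable fun p : ℕ × ℕ × ℕ =>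
    ‖if p.1 + p.2.2 = k + p.2.1 then v p.1 * (starRingEnd ℂ) (v p.2.1) * v p.2.2 else 0‖

/-- Continuity of `t ↦ u(t)` as a curve with values in `H^s₊`. -/
def HsContinuous (s : ℝ) (u : ℝ → ℕ → ℂ) : Prop :=
  ∀ t₀ : ℝ, ∀ δ : ℝ, 0 < δ → ∃ η > 0, ∀ t : ℝ, |t - t₀| < η →
    hsNorm s (fun k => u t k - u t₀ k) < δ

/-- `u ∈ C(ℝ, H^s₊)` is a solution of the NLS–Szegő equation
`i ∂ₜ u + ε^α ∂ₓ² u = Π(|u|²u)`, written on Fourier coefficients. -/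
def IsSolutionNLSSzego (s ε α : ℝ) (u : ℝ → ℕ → ℂ) : Prop :=
  (∀ t : ℝ, InHs s (u t)) ∧ HsContinuous s u ∧
  ∀ t : ℝ, ∀ k : ℕ, CubicSummable (u t) k ∧
    HasDerivAt (fun τ : ℝ => u τ k)
      (-Complex.I * (((ε ^ α * (k : ℝ) ^ 2 : ℝ) : ℂ) * u t k + cubicTerm (u t) k)) t

/-- The Hamiltonian vector field of the cubic functional
`F_m(v) = Σ_{j-l+k=m} Re(a_{j,l,k} v_j conj(v_l) v_k)`:
`X(v)(n) = -2i Σ_{k-l+n=m} conj(a_{k,l,n}) conj(v_k) v_l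
           - i Σ_{k+l=m+n} a_{k,n,l} v_k v_l`. -/
noncomputable def Xa (m : ℕ) (a : ℕ → ℕ → ℕ → ℂ) (v : ℕ → ℂ) : ℕ → ℂ := fun n =>
  (-2) * Complex.I *
    (∑' p : ℕ × ℕ, if p.1 + n = p.2 + m then
      (starRingEnd ℂ) (a p.1 p.2 n) * (starRingEnd ℂ) (v p.1) * v p.2 else 0)
  - Complex.I *
    (∑' p : ℕ × ℕ, if p.1 + p.2 = m + n then a p.1 n p.2 * v p.1 * v p.2 else 0)



open scoped ENNReal NNReal

set_option maxHeartbeats 1000000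

lemma ofReal_norm_eq_coe_nnnorm {E : Type*} [SeminormedAddGroup E] (x : E) :
    ENNReal.ofReal ‖x‖ = (‖x‖₊ : ℝ≥0∞) := ofReal_norm x

lemma mul_le_sq_add_sq (a b : ℝ≥0∞) : a * b ≤ a ^ 2 + b ^ 2 := by
  rcases le_total a b with h | h
  · calc a * b ≤ b * b := mul_le_mul_left h b
    _ = b ^ 2 := (sq b).symm
    _ ≤ a ^ 2 + b ^ 2 := le_add_self
  · calc a * b ≤ a * a := mul_le_mul_right h a
    _ = a ^ 2 := (sq a).symm
    _ ≤ a ^ 2 + b ^ 2 := le_self_add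

lemma sq_tsum_eq {ι : Type*} (f : ι → ℝ≥0∞) : (∑' k, f k) ^ 2 = ∑' k, ∑' l, f k * f l := by
  rw [sq, ← ENNReal.tsum_mul_right]
  exact tsum_congr fun k => (ENNReal.tsum_mul_left).symm

/-- The key Schur-type bilinear estimate. -/
lemma key (χ : ℕ × ℕ → ℕ → ℝ≥0∞) (c d : ℕ → ℝ≥0∞)
    (H1 : ∀ p, (∑' n, χ p n) ≤ 1)
    (H2 : ∀ n x, (∑' y, χ (x, y) n) ≤ 1) :
    (∑' n, (∑' p : ℕ × ℕ, χ p n * (c p.1 * d p.2)) ^ 2) ≤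
      2 * ((∑' x, c x) ^ 2 * (∑' x, (d x) ^ 2)) := by
  -- double sum bound
  have main : ∀ (B : ℕ × ℕ → ℝ≥0∞), (∀ p, B p ≤ c p.1 * (d p.2)^2) →
      (∑' n, ∑' (p : ℕ × ℕ), ∑' (q : ℕ × ℕ), χ p n * χ q n * (c q.1 * B p)) ≤
        (∑' x, c x) ^ 2 * (∑' x, (d x) ^ 2) := by
    intro B hB
    have step1 : ∀ n p, (∑' (q : ℕ × ℕ), χ p n * χ q n * (c q.1 * B p)) ≤
        χ p n * B p * (∑' x, c x) := by
      intro n p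
      have : ∀ q : ℕ × ℕ, χ p n * χ q n * (c q.1 * B p) = (χ p n * B p) * (χ q n * c q.1) := by
        intro q; ring
      rw [tsum_congr this, ENNReal.tsum_mul_left]
      refine mul_le_mul_right ?_ _
      calc (∑' (q : ℕ × ℕ), χ q n * c q.1)
          = ∑' x, ∑' y, χ (x, y) n * c x := by rw [← ENNReal.tsum_prod]
        _ = ∑' x, c x * ∑' y, χ (x, y) n := by
            refine tsum_congr fun x => ?_
            rw [← ENNReal.tsum_mul_left]
            exact tsum_congr fun y => by ring
        _ ≤ ∑' x, c x * 1 := ENNReal.tsum_le_tsum fun x => mul_le_mul_right (H2 _ _) _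
        _ = ∑' x, c x := by simp
    calc (∑' n, ∑' (p : ℕ × ℕ), ∑' (q : ℕ × ℕ), χ p n * χ q n * (c q.1 * B p))
        ≤ ∑' n, ∑' (p : ℕ × ℕ), χ p n * B p * (∑' x, c x) := by
          exact ENNReal.tsum_le_tsum fun n => ENNReal.tsum_le_tsum fun p => step1 n p
      _ = ∑' (p : ℕ × ℕ), (B p * (∑' x, c x)) * ∑' n, χ p n := by
          rw [ENNReal.tsum_comm]
          refine tsum_congr fun p => ?_
          rw [← ENNReal.tsum_mul_left]
          exact tsum_congr fun n => by ring
      _ ≤ ∑' (p : ℕ × ℕ), (B p * (∑' x, c x)) * 1 :=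
          ENNReal.tsum_le_tsum fun p => mul_le_mul_right (H1 p) _
      _ ≤ ∑' (p : ℕ × ℕ), (c p.1 * (d p.2)^2) * (∑' x, c x) := by
          refine ENNReal.tsum_le_tsum fun p => ?_
          rw [mul_one]
          exact mul_le_mul_left (hB p) _
      _ = (∑' (p : ℕ × ℕ), c p.1 * (d p.2)^2) * (∑' x, c x) := ENNReal.tsum_mul_right
      _ = ((∑' x, c x) * (∑' x, (d x)^2)) * (∑' x, c x) := by
          congr 1
          calc (∑' (p : ℕ × ℕ), c p.1 * (d p.2)^2) = ∑' x, ∑' y, c x * (d y)^2 := by rw [← ENNReal.tsum_prod]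
          _ = ∑' x, c x * ∑' y, (d y)^2 := tsum_congr fun x => ENNReal.tsum_mul_left
          _ = _ := ENNReal.tsum_mul_right
      _ = (∑' x, c x) ^ 2 * (∑' x, (d x) ^ 2) := by ring
  calc (∑' n, (∑' p : ℕ × ℕ, χ p n * (c p.1 * d p.2)) ^ 2)
      = ∑' n, ∑' (p : ℕ × ℕ), ∑' (q : ℕ × ℕ),
          (χ p n * (c p.1 * d p.2)) * (χ q n * (c q.1 * d q.2)) :=
        tsum_congr fun n => sq_tsum_eq _
    _ ≤ ∑' n, ∑' (p : ℕ × ℕ), ∑' (q : ℕ × ℕ),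
          (χ p n * χ q n * (c q.1 * (c p.1 * (d p.2)^2)) +
           χ p n * χ q n * (c p.1 * (c q.1 * (d q.2)^2))) := by
        refine ENNReal.tsum_le_tsum fun n => ENNReal.tsum_le_tsum fun p =>
          ENNReal.tsum_le_tsum fun q => ?_
        calc (χ p n * (c p.1 * d p.2)) * (χ q n * (c q.1 * d q.2))
            = (χ p n * χ q n * (c p.1 * c q.1)) * (d p.2 * d q.2) := by ring
          _ ≤ (χ p n * χ q n * (c p.1 * c q.1)) * ((d p.2)^2 + (d q.2)^2) :=
              mul_le_mul_right (mul_le_sq_add_sq _ _) _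
          _ = _ := by ring
    _ = (∑' n, ∑' (p : ℕ × ℕ), ∑' (q : ℕ × ℕ), χ p n * χ q n * (c q.1 * (c p.1 * (d p.2)^2)))
        + (∑' n, ∑' (p : ℕ × ℕ), ∑' (q : ℕ × ℕ), χ p n * χ q n * (c p.1 * (c q.1 * (d q.2)^2))) := by
        rw [← ENNReal.tsum_add]
        refine tsum_congr fun n => ?_
        rw [← ENNReal.tsum_add]
        refine tsum_congr fun p => ?_
        exact ENNReal.tsum_add
    _ ≤ (∑' x, c x) ^ 2 * (∑' x, (d x) ^ 2) + (∑' x, c x) ^ 2 * (∑' x, (d x) ^ 2) := by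
        refine add_le_add (main _ fun p => le_rfl) ?_
        have swap : (∑' n, ∑' (p : ℕ × ℕ), ∑' (q : ℕ × ℕ),
            χ p n * χ q n * (c p.1 * (c q.1 * (d q.2)^2)))
            = ∑' n, ∑' (p : ℕ × ℕ), ∑' (q : ℕ × ℕ), χ p n * χ q n * (c q.1 * (c p.1 * (d p.2)^2)) := by
          refine tsum_congr fun n => ?_
          rw [ENNReal.tsum_comm]
          refine tsum_congr fun p => tsum_congr fun q => by ring
        rw [swap]
        exact main _ fun p => le_rfl
    _ = 2 * ((∑' x, c x) ^ 2 * (∑' x, (d x) ^ 2)) := (two_mul _).symm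

lemma key' (χ : ℕ × ℕ → ℕ → ℝ≥0∞) (c d : ℕ → ℝ≥0∞)
    (H1 : ∀ p, (∑' n, χ p n) ≤ 1)
    (H2' : ∀ n y, (∑' x, χ (x, y) n) ≤ 1) :
    (∑' n, (∑' p : ℕ × ℕ, χ p n * (c p.1 * d p.2)) ^ 2) ≤
      2 * ((∑' x, d x) ^ 2 * (∑' x, (c x) ^ 2)) := by
  have hswap : ∀ n, (∑' p : ℕ × ℕ, χ p n * (c p.1 * d p.2))
      = ∑' p : ℕ × ℕ, (fun q : ℕ × ℕ => χ (q.2, q.1) n) p * (d p.1 * c p.2) := by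
    intro n
    rw [← (Equiv.prodComm ℕ ℕ).tsum_eq (fun p : ℕ × ℕ => χ p n * (c p.1 * d p.2))]
    refine tsum_congr fun p => ?_
    simp [Equiv.prodComm, Prod.swap, mul_comm]
  calc (∑' n, (∑' p : ℕ × ℕ, χ p n * (c p.1 * d p.2)) ^ 2)
      = ∑' n, (∑' p : ℕ × ℕ, (fun q : ℕ × ℕ => χ (q.2, q.1) n) p * (d p.1 * c p.2)) ^ 2 :=
        tsum_congr fun n => by rw [hswap]
    _ ≤ 2 * ((∑' x, d x) ^ 2 * (∑' x, (c x) ^ 2)) := by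
        refine key _ d c (fun p => ?_) (fun n x => ?_)
        · exact H1 (p.2, p.1)
        · exact H2' n x

noncomputable def wE (s : ℝ) (k : ℕ) : ℝ≥0∞ := ENNReal.ofReal ((1 + (k : ℝ) ^ 2) ^ (s / 2))

noncomputable def AE (s : ℝ) (u : ℕ → ℂ) : ℝ≥0∞ := ∑' k, (wE s k * (‖u k‖₊ : ℝ≥0∞)) ^ 2

lemma base_nonneg (k : ℕ) : (0:ℝ) ≤ 1 + (k : ℝ) ^ 2 := by positivity

lemma term_eq (s : ℝ) (u : ℕ → ℂ) (k : ℕ) :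
    (wE s k * (‖u k‖₊ : ℝ≥0∞)) ^ 2 = ENNReal.ofReal ((1 + (k : ℝ) ^ 2) ^ s * ‖u k‖ ^ 2) := by
  have h1 : ((‖u k‖₊ : ℝ≥0∞)) = ENNReal.ofReal ‖u k‖ := (ofReal_norm_eq_coe_nnnorm _).symm
  have h2 : ((1 + (k : ℝ) ^ 2) ^ (s / 2)) ^ 2 = (1 + (k : ℝ) ^ 2) ^ s := by
    rw [← Real.rpow_natCast ((1 + (k : ℝ) ^ 2) ^ (s / 2)) 2, ← Real.rpow_mul (base_nonneg k)]
    norm_num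
  rw [wE, h1, ← ENNReal.ofReal_mul (Real.rpow_nonneg (base_nonneg k) _),
    ← ENNReal.ofReal_pow (by positivity), mul_pow, h2]

lemma AE_eq (s : ℝ) (u : ℕ → ℂ) (h : InHs s u) : AE s u = ENNReal.ofReal (hsNormSq s u) := by
  rw [AE, hsNormSq, ENNReal.ofReal_tsum_of_nonneg (fun k => by positivity) h]
  exact tsum_congr fun k => term_eq s u k

lemma inHs_iff (s : ℝ) (u : ℕ → ℂ) : InHs s u ↔ AE s u ≠ ⊤ := by
  have hterm : ∀ k, (wE s k * (‖u k‖₊ : ℝ≥0∞)) ^ 2 =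
      ((((1 + (k : ℝ) ^ 2) ^ s * ‖u k‖ ^ 2).toNNReal : ℝ≥0) : ℝ≥0∞) := fun k => term_eq s u k
  rw [AE, tsum_congr hterm, ENNReal.tsum_coe_ne_top_iff_summable, InHs]
  constructor
  · intro hsum
    have := hsum.toNNReal
    convert this using 1
  · intro hsum
    have := (NNReal.summable_coe).2 hsum
    refine this.congr fun k => ?_
    exact Real.coe_toNNReal _ (by positivity)

noncomputable def wInv (s : ℝ) (k : ℕ) : ℝ≥0∞ := ENNReal.ofReal ((1 + (k : ℝ) ^ 2) ^ (-(s / 2)))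

lemma w_mul_wInv (s : ℝ) (k : ℕ) : wInv s k * wE s k = 1 := by
  have hpos : (0:ℝ) < 1 + (k : ℝ) ^ 2 := by positivity
  rw [wInv, wE, ← ENNReal.ofReal_mul (Real.rpow_nonneg hpos.le _),
    ← Real.rpow_add hpos]
  norm_num

/-- summability of the inverse weights squared -/
lemma sig_lt_top (s : ℝ) (hs : 1 / 2 < s) : (∑' k, (wInv s k) ^ 2) ≠ ⊤ := by
  have hterm : ∀ k : ℕ, (wInv s k) ^ 2 = ENNReal.ofReal ((1 + (k : ℝ) ^ 2) ^ (-s)) := by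
    intro k
    have hpos : (0:ℝ) < 1 + (k : ℝ) ^ 2 := by positivity
    rw [wInv, ← ENNReal.ofReal_pow (Real.rpow_nonneg hpos.le _)]
    congr 1
    rw [← Real.rpow_natCast ((1 + (k : ℝ) ^ 2) ^ (-(s/2))) 2, ← Real.rpow_mul hpos.le]
    norm_num
  rw [tsum_congr hterm]
  -- summability of the real series
  have hsum : Summable fun k : ℕ => (1 + (k : ℝ) ^ 2) ^ (-s) := by
    have h1 : Summable fun n : ℕ => 1 / (n : ℝ) ^ (2 * s) :=
      Real.summable_one_div_nat_rpow.2 (by linarith)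
    have h2 : Summable fun n : ℕ => 1 / ((n + 1 : ℕ) : ℝ) ^ (2 * s) :=
      (summable_nat_add_iff 1).2 h1
    have h3 : Summable fun n : ℕ => 2 ^ s * (1 / ((n + 1 : ℕ) : ℝ) ^ (2 * s)) := h2.mul_left _
    refine h3.of_nonneg_of_le (fun k => Real.rpow_nonneg (base_nonneg k) _) (fun k => ?_)
    have hpos : (0:ℝ) < 1 + (k : ℝ) ^ 2 := by positivity
    have hk1 : (0:ℝ) < ((k + 1 : ℕ) : ℝ) := by positivity
    have key : ((k + 1 : ℕ) : ℝ) ^ (2 * s) ≤ 2 ^ s * (1 + (k : ℝ) ^ 2) ^ s := by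
      have e1 : ((k + 1 : ℕ) : ℝ) ^ (2 * s) = (((k + 1 : ℕ) : ℝ) ^ 2) ^ s := by
        rw [← Real.rpow_natCast ((k + 1 : ℕ) : ℝ) 2, ← Real.rpow_mul hk1.le]
        norm_num [mul_comm]
      have e2 : (2:ℝ) ^ s * (1 + (k : ℝ) ^ 2) ^ s = (2 * (1 + (k : ℝ) ^ 2)) ^ s :=
        (Real.mul_rpow (by norm_num) hpos.le).symm
      rw [e1, e2]
      refine Real.rpow_le_rpow (by positivity) ?_ (by linarith)
      push_cast
      nlinarith [sq_nonneg ((k:ℝ) - 1)]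
    rw [Real.rpow_neg hpos.le]
    have hb : (0:ℝ) < ((k + 1 : ℕ) : ℝ) ^ (2 * s) := Real.rpow_pos_of_pos hk1 _
    have hA : (0:ℝ) < (1 + (k : ℝ) ^ 2) ^ s := Real.rpow_pos_of_pos hpos _
    rw [mul_one_div, le_div_iff₀ hb]
    rw [inv_mul_le_iff₀ hA]
    calc ((k + 1 : ℕ) : ℝ) ^ (2*s) ≤ 2 ^ s * (1 + (k:ℝ)^2)^s := key
    _ = (1 + (k:ℝ)^2)^s * 2^s := by ring
  -- conclude
  have : ∀ k : ℕ, ENNReal.ofReal ((1 + (k : ℝ) ^ 2) ^ (-s)) =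
      (((((1 + (k : ℝ) ^ 2) ^ (-s)).toNNReal) : ℝ≥0) : ℝ≥0∞) := fun k => rfl
  rw [tsum_congr this, ENNReal.tsum_coe_ne_top_iff_summable]
  exact hsum.toNNReal

/-- tsum of an indicator over a subsingleton condition -/
lemma tsum_ite_le_one (Q : ℕ → Prop) [DecidablePred Q] (h : ∀ a b, Q a → Q b → a = b) :
    (∑' n, (if Q n then (1:ℝ≥0∞) else 0)) ≤ 1 := by
  by_cases hex : ∃ n, Q n
  · obtain ⟨n₀, hn₀⟩ := hex
    rw [tsum_eq_single n₀ (fun b hb => ?_)]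
    · split <;> simp
    · simp only [ite_eq_right_iff]
      intro hQb
      exact absurd (h b n₀ hQb hn₀) hb
  · push_neg at hex
    have : ∀ n, (if Q n then (1:ℝ≥0∞) else 0) = 0 := fun n => by simp [hex n]
    rw [tsum_congr this]
    simp

/-- The weight inequality. -/
lemma weight_ineq (s : ℝ) (hs : 0 ≤ s) (m : ℕ) :
    ∃ K : ℝ, 0 < K ∧ ∀ n k l : ℕ, (n:ℝ) ≤ (k:ℝ) + l + m →
      (1 + (n:ℝ) ^ 2) ^ (s/2) ≤ K * ((1 + (k:ℝ) ^ 2) ^ (s/2) + (1 + (l:ℝ) ^ 2) ^ (s/2)) := by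
  refine ⟨(8 * (1 + 2 * (m:ℝ) ^ 2)) ^ (s/2), Real.rpow_pos_of_pos (by positivity) _, ?_⟩
  intro n k l hn
  set M : ℝ := max (1 + (k:ℝ)^2) (1 + (l:ℝ)^2) with hM
  have hM1 : 1 + (k:ℝ)^2 ≤ M := le_max_left _ _
  have hM2 : 1 + (l:ℝ)^2 ≤ M := le_max_right _ _
  have hMpos : (0:ℝ) < M := lt_of_lt_of_le (by positivity) hM1
  have step1 : 1 + (n:ℝ)^2 ≤ (8 * (1 + 2 * (m:ℝ)^2)) * M := by
    nlinarith [sq_nonneg ((k:ℝ) - l), sq_nonneg ((k:ℝ) - m), sq_nonneg ((l:ℝ) - m),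
      sq_nonneg ((k:ℝ) + l + m - n), (base_nonneg n), sq_nonneg (m:ℝ)]
  calc (1 + (n:ℝ) ^ 2) ^ (s/2) ≤ ((8 * (1 + 2 * (m:ℝ)^2)) * M) ^ (s/2) :=
        Real.rpow_le_rpow (base_nonneg n) step1 (by linarith)
    _ = (8 * (1 + 2 * (m:ℝ)^2)) ^ (s/2) * M ^ (s/2) :=
        Real.mul_rpow (by positivity) hMpos.le
    _ ≤ (8 * (1 + 2 * (m:ℝ)^2)) ^ (s/2) * ((1 + (k:ℝ)^2) ^ (s/2) + (1 + (l:ℝ)^2) ^ (s/2)) := by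
        refine mul_le_mul_of_nonneg_left ?_ (by positivity)
        rw [hM]
        rcases le_total (1 + (k:ℝ)^2) (1 + (l:ℝ)^2) with hc | hc
        · rw [max_eq_right hc]
          exact le_add_of_nonneg_left (Real.rpow_nonneg (base_nonneg k) _)
        · rw [max_eq_left hc]
          exact le_add_of_nonneg_right (Real.rpow_nonneg (base_nonneg l) _)


lemma enorm_tsum_le {ι : Type*} (f : ι → ℂ) :
    ((‖∑' i, f i‖₊ : ℝ≥0∞)) ≤ ∑' i, (‖f i‖₊ : ℝ≥0∞) := by
  by_cases hf : Summable f
  · have hn : Summable fun i => ‖f i‖ := summable_norm_iff.2 hf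
    calc ((‖∑' i, f i‖₊ : ℝ≥0∞)) = ENNReal.ofReal ‖∑' i, f i‖ :=
          (ofReal_norm_eq_coe_nnnorm _).symm
      _ ≤ ENNReal.ofReal (∑' i, ‖f i‖) :=
          ENNReal.ofReal_le_ofReal (norm_tsum_le_tsum_norm hn)
      _ = ∑' i, ENNReal.ofReal ‖f i‖ :=
          ENNReal.ofReal_tsum_of_nonneg (fun i => norm_nonneg _) hn
      _ = ∑' i, (‖f i‖₊ : ℝ≥0∞) := tsum_congr fun i => ofReal_norm_eq_coe_nnnorm _
  · rw [tsum_eq_zero_of_not_summable hf]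
    simp

lemma summable_of_ennreal_bound {ι : Type*} (f : ι → ℂ) (b : ι → ℝ≥0∞)
    (hfb : ∀ p, (‖f p‖₊ : ℝ≥0∞) ≤ b p) (hb : (∑' p, b p) ≠ ⊤) : Summable f := by
  have h1 : (∑' p, (‖f p‖₊ : ℝ≥0∞)) ≠ ⊤ := ne_top_of_le_ne_top hb (ENNReal.tsum_le_tsum hfb)
  rw [ENNReal.tsum_coe_ne_top_iff_summable] at h1
  exact summable_norm_iff.1 ((NNReal.summable_coe.2 h1).congr fun p => coe_nnnorm _)

/-- Cauchy–Schwarz with a loss. -/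
lemma cs2 (a b : ℕ → ℝ≥0∞) :
    (∑' k, a k * b k) ^ 2 ≤ 2 * ((∑' k, (a k) ^ 2) * (∑' k, (b k) ^ 2)) := by
  rw [sq_tsum_eq]
  calc ∑' k, ∑' l, (a k * b k) * (a l * b l)
      ≤ ∑' k, ∑' l, ((a k * b l) ^ 2 + (a l * b k) ^ 2) := by
        refine ENNReal.tsum_le_tsum fun k => ENNReal.tsum_le_tsum fun l => ?_
        calc (a k * b k) * (a l * b l) = (a k * b l) * (a l * b k) := by ring
        _ ≤ _ := mul_le_sq_add_sq _ _
    _ = (∑' k, ∑' l, (a k * b l) ^ 2) + ∑' k, ∑' l, (a l * b k) ^ 2 := by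
        rw [← ENNReal.tsum_add]
        exact tsum_congr fun k => ENNReal.tsum_add
    _ = 2 * ((∑' k, (a k) ^ 2) * (∑' k, (b k) ^ 2)) := by
        have h1 : (∑' k, ∑' l, (a k * b l) ^ 2) = (∑' k, (a k) ^ 2) * (∑' k, (b k) ^ 2) := by
          rw [← ENNReal.tsum_mul_right]
          refine tsum_congr fun k => ?_
          rw [← ENNReal.tsum_mul_left]
          exact tsum_congr fun l => by ring
        have h2 : (∑' k, ∑' l, (a l * b k) ^ 2) = (∑' k, (a k) ^ 2) * (∑' k, (b k) ^ 2) := by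
          rw [ENNReal.tsum_comm (f := fun k l => (a l * b k) ^ 2)]
          rw [← ENNReal.tsum_mul_right]
          refine tsum_congr fun k => ?_
          rw [← ENNReal.tsum_mul_left]
          exact tsum_congr fun l => by ring
        rw [h1, h2, two_mul]

lemma sq_add_le3 (a b : ℝ≥0∞) : (a + b) ^ 2 ≤ 3 * (a ^ 2 + b ^ 2) := by
  have h : a * b ≤ a ^ 2 + b ^ 2 := mul_le_sq_add_sq a b
  calc (a + b) ^ 2 = a ^ 2 + b ^ 2 + (a * b + a * b) := by ring
    _ ≤ a ^ 2 + b ^ 2 + ((a ^ 2 + b ^ 2) + (a ^ 2 + b ^ 2)) :=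
      add_le_add_right (add_le_add h h) _
    _ = 3 * (a ^ 2 + b ^ 2) := by ring

/-- `ℓ¹`-norm controlled by weighted `ℓ²`-norm. -/
lemma ell1_sq_le (s : ℝ) (d : ℕ → ℝ≥0∞) :
    (∑' k, d k) ^ 2 ≤ 2 * ((∑' k, (wInv s k) ^ 2) * (∑' k, (wE s k * d k) ^ 2)) := by
  have h : ∀ k, d k = wInv s k * (wE s k * d k) := by
    intro k
    rw [← mul_assoc, w_mul_wInv, one_mul]
  calc (∑' k, d k) ^ 2 = (∑' k, wInv s k * (wE s k * d k)) ^ 2 := by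
        rw [tsum_congr h]
    _ ≤ 2 * ((∑' k, (wInv s k) ^ 2) * (∑' k, (wE s k * d k) ^ 2)) := cs2 _ _

/-- Main block estimate. -/
lemma blockBound (s : ℝ) (m : ℕ) (K : ℝ) (hK0 : 0 ≤ K)
    (hK : ∀ n k l : ℕ, (n:ℝ) ≤ (k:ℝ) + l + m →
      (1 + (n:ℝ) ^ 2) ^ (s/2) ≤ K * ((1 + (k:ℝ) ^ 2) ^ (s/2) + (1 + (l:ℝ) ^ 2) ^ (s/2)))
    (χ : ℕ × ℕ → ℕ → ℝ≥0∞) (hχ01 : ∀ p n, χ p n = 0 ∨ χ p n = 1)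
    (hsupp : ∀ p n, χ p n ≠ 0 → n ≤ p.1 + p.2 + m)
    (H1 : ∀ p, (∑' n, χ p n) ≤ 1) (H2 : ∀ n x, (∑' y, χ (x, y) n) ≤ 1)
    (H2' : ∀ n y, (∑' x, χ (x, y) n) ≤ 1)
    (c d : ℕ → ℝ≥0∞) :
    (∑' n, (wE s n * ∑' p : ℕ × ℕ, χ p n * (c p.1 * d p.2)) ^ 2) ≤
      24 * ENNReal.ofReal K ^ 2 * (∑' k, (wInv s k) ^ 2) *
        ((∑' k, (wE s k * c k) ^ 2) * (∑' k, (wE s k * d k) ^ 2)) := by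
  set KE : ℝ≥0∞ := ENNReal.ofReal K with hKE
  set U1 : ℕ → ℝ≥0∞ := fun n => ∑' p : ℕ × ℕ, χ p n * ((wE s p.1 * c p.1) * d p.2) with hU1
  set U2 : ℕ → ℝ≥0∞ := fun n => ∑' p : ℕ × ℕ, χ p n * (c p.1 * (wE s p.2 * d p.2)) with hU2
  -- pointwise weight transfer
  have hpt : ∀ n, wE s n * (∑' p : ℕ × ℕ, χ p n * (c p.1 * d p.2)) ≤ KE * (U1 n + U2 n) := by
    intro n
    rw [← ENNReal.tsum_mul_left]
    calc (∑' p : ℕ × ℕ, wE s n * (χ p n * (c p.1 * d p.2)))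
        ≤ ∑' p : ℕ × ℕ, (KE * (χ p n * ((wE s p.1 * c p.1) * d p.2))
            + KE * (χ p n * (c p.1 * (wE s p.2 * d p.2)))) := by
          refine ENNReal.tsum_le_tsum fun p => ?_
          rcases hχ01 p n with h0 | h1
          · simp [h0]
          · have hn : n ≤ p.1 + p.2 + m := hsupp p n (by rw [h1]; exact one_ne_zero)
            have hnR : (n:ℝ) ≤ (p.1:ℝ) + p.2 + m := by exact_mod_cast hn
            have hw : wE s n ≤ KE * (wE s p.1 + wE s p.2) := by
              rw [wE, wE, wE, hKE, ← ENNReal.ofReal_add (Real.rpow_nonneg (base_nonneg _) _)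
                (Real.rpow_nonneg (base_nonneg _) _), ← ENNReal.ofReal_mul hK0]
              exact ENNReal.ofReal_le_ofReal (hK n p.1 p.2 hnR)
            calc wE s n * (χ p n * (c p.1 * d p.2))
                ≤ (KE * (wE s p.1 + wE s p.2)) * (χ p n * (c p.1 * d p.2)) :=
                  mul_le_mul_left hw _
              _ = KE * (χ p n * ((wE s p.1 * c p.1) * d p.2))
                  + KE * (χ p n * (c p.1 * (wE s p.2 * d p.2))) := by ring
      _ = KE * (U1 n + U2 n) := by
          rw [ENNReal.tsum_add, ENNReal.tsum_mul_left, ENNReal.tsum_mul_left, hU1, hU2,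
            mul_add]
  -- sum the squares
  calc (∑' n, (wE s n * ∑' p : ℕ × ℕ, χ p n * (c p.1 * d p.2)) ^ 2)
      ≤ ∑' n, (KE * (U1 n + U2 n)) ^ 2 :=
        ENNReal.tsum_le_tsum fun n => pow_le_pow_left' (hpt n) 2
    _ = ∑' n, KE ^ 2 * (U1 n + U2 n) ^ 2 := tsum_congr fun n => by ring
    _ ≤ ∑' n, KE ^ 2 * (3 * (U1 n ^ 2 + U2 n ^ 2)) :=
        ENNReal.tsum_le_tsum fun n => mul_le_mul_right (sq_add_le3 _ _) _
    _ = 3 * KE ^ 2 * ((∑' n, U1 n ^ 2) + ∑' n, U2 n ^ 2) := by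
        rw [← ENNReal.tsum_add]
        rw [← ENNReal.tsum_mul_left]
        exact tsum_congr fun n => by ring
    _ ≤ 3 * KE ^ 2 * ((2 * ((∑' x, d x) ^ 2 * (∑' k, (wE s k * c k) ^ 2)))
          + 2 * ((∑' x, c x) ^ 2 * (∑' k, (wE s k * d k) ^ 2))) := by
        refine mul_le_mul_right (add_le_add ?_ ?_) _
        · exact key' χ (fun k => wE s k * c k) d H1 H2'
        · exact key χ c (fun k => wE s k * d k) H1 H2
    _ ≤ 3 * KE ^ 2 * ((2 * ((2 * ((∑' k, (wInv s k) ^ 2) * (∑' k, (wE s k * d k) ^ 2)))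
            * (∑' k, (wE s k * c k) ^ 2)))
          + 2 * ((2 * ((∑' k, (wInv s k) ^ 2) * (∑' k, (wE s k * c k) ^ 2)))
            * (∑' k, (wE s k * d k) ^ 2))) := by
        refine mul_le_mul_right (add_le_add ?_ ?_) _
        · exact mul_le_mul_right (mul_le_mul_left (ell1_sq_le s d) _) _
        · exact mul_le_mul_right (mul_le_mul_left (ell1_sq_le s c) _) _
    _ = 24 * KE ^ 2 * (∑' k, (wInv s k) ^ 2) *
        ((∑' k, (wE s k * c k) ^ 2) * (∑' k, (wE s k * d k) ^ 2)) := by ring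

lemma sq_add4_le (w A B C D : ℝ≥0∞) :
    (w * ((A + B) + (C + D))) ^ 2 ≤
      9 * (((w * A) ^ 2 + (w * B) ^ 2) + ((w * C) ^ 2 + (w * D) ^ 2)) := by
  calc (w * ((A + B) + (C + D))) ^ 2 = ((w * A + w * B) + (w * C + w * D)) ^ 2 := by ring
    _ ≤ 3 * ((w * A + w * B) ^ 2 + (w * C + w * D) ^ 2) := sq_add_le3 _ _
    _ ≤ 3 * ((3 * ((w * A) ^ 2 + (w * B) ^ 2)) + (3 * ((w * C) ^ 2 + (w * D) ^ 2))) :=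
      mul_le_mul_right (add_le_add (sq_add_le3 _ _) (sq_add_le3 _ _)) _
    _ = 9 * (((w * A) ^ 2 + (w * B) ^ 2) + ((w * C) ^ 2 + (w * D) ^ 2)) := by ring

lemma nnnorm_cubic_diff (α x1 x2 y1 y2 : ℂ) (hα : ‖α‖ ≤ 1) :
    (‖α * x1 * x2 - α * y1 * y2‖₊ : ℝ≥0∞) ≤
      (‖x1 - y1‖₊ : ℝ≥0∞) * (‖x2‖₊ : ℝ≥0∞) + (‖y1‖₊ : ℝ≥0∞) * (‖x2 - y2‖₊ : ℝ≥0∞) := by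
  have hr : ‖α * x1 * x2 - α * y1 * y2‖ ≤ ‖x1 - y1‖ * ‖x2‖ + ‖y1‖ * ‖x2 - y2‖ := by
    have he : α * x1 * x2 - α * y1 * y2 = α * ((x1 - y1) * x2) + α * (y1 * (x2 - y2)) := by
      ring
    rw [he]
    calc ‖α * ((x1 - y1) * x2) + α * (y1 * (x2 - y2))‖
        ≤ ‖α * ((x1 - y1) * x2)‖ + ‖α * (y1 * (x2 - y2))‖ := norm_add_le _ _
      _ = ‖α‖ * (‖x1 - y1‖ * ‖x2‖) + ‖α‖ * (‖y1‖ * ‖x2 - y2‖) := by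
          rw [norm_mul, norm_mul, norm_mul, norm_mul]
      _ ≤ 1 * (‖x1 - y1‖ * ‖x2‖) + 1 * (‖y1‖ * ‖x2 - y2‖) := by
          gcongr <;> positivity
      _ = ‖x1 - y1‖ * ‖x2‖ + ‖y1‖ * ‖x2 - y2‖ := by ring
  calc (‖α * x1 * x2 - α * y1 * y2‖₊ : ℝ≥0∞) = ENNReal.ofReal ‖α * x1 * x2 - α * y1 * y2‖ :=
        (ofReal_norm_eq_coe_nnnorm _).symm
    _ ≤ ENNReal.ofReal (‖x1 - y1‖ * ‖x2‖ + ‖y1‖ * ‖x2 - y2‖) := ENNReal.ofReal_le_ofReal hr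
    _ = _ := by
        rw [ENNReal.ofReal_add (by positivity) (by positivity),
          ENNReal.ofReal_mul (norm_nonneg _), ENNReal.ofReal_mul (norm_nonneg _),
          ofReal_norm_eq_coe_nnnorm, ofReal_norm_eq_coe_nnnorm, ofReal_norm_eq_coe_nnnorm,
          ofReal_norm_eq_coe_nnnorm]

/-- The master ENNReal estimate. -/
lemma master (m : ℕ) (a : ℕ → ℕ → ℕ → ℂ)
    (hbd : ∀ j l k : ℕ, j + k = l + m → ‖a j l k‖ ≤ 1 / 2)
    (s : ℝ) (hs : 1 / 2 < s) :
    ∃ C₀ : ℝ≥0∞, C₀ ≠ ⊤ ∧ ∀ v h : ℕ → ℂ, InHs s v → InHs s h →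
      (∑' n, (wE s n * (‖Xa m a v n - Xa m a h n‖₊ : ℝ≥0∞)) ^ 2)
        ≤ C₀ * ((AE s v + AE s h) * AE s (fun k => v k - h k)) := by
  obtain ⟨K, hKpos, hK⟩ := weight_ineq s (by linarith) m
  set KE : ℝ≥0∞ := ENNReal.ofReal K with hKE
  set Sig : ℝ≥0∞ := ∑' k, (wInv s k) ^ 2 with hSig
  have hSigTop : Sig ≠ ⊤ := sig_lt_top s hs
  have hKETop : KE ≠ ⊤ := ENNReal.ofReal_ne_top
  refine ⟨3456 * KE ^ 2 * Sig, ?_, ?_⟩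
  · exact ENNReal.mul_ne_top (ENNReal.mul_ne_top (by norm_num) (ENNReal.pow_ne_top hKETop))
      hSigTop
  intro v h hv hh
  -- notation
  set gV : ℕ → ℝ≥0∞ := fun k => (‖v k‖₊ : ℝ≥0∞) with hgV
  set gH : ℕ → ℝ≥0∞ := fun k => (‖h k‖₊ : ℝ≥0∞) with hgH
  set gD : ℕ → ℝ≥0∞ := fun k => (‖v k - h k‖₊ : ℝ≥0∞) with hgD
  set χ1 : ℕ × ℕ → ℕ → ℝ≥0∞ := fun p n => if p.1 + n = p.2 + m then 1 else 0 with hχ1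
  set χ2 : ℕ × ℕ → ℕ → ℝ≥0∞ := fun p n => if p.1 + p.2 = m + n then 1 else 0 with hχ2
  -- χ properties
  have hχ101 : ∀ p n, χ1 p n = 0 ∨ χ1 p n = 1 := by
    intro p n
    by_cases hc : p.1 + n = p.2 + m
    · right; simp [hχ1, hc]
    · left; simp [hχ1, hc]
  have hχ201 : ∀ p n, χ2 p n = 0 ∨ χ2 p n = 1 := by
    intro p n
    by_cases hc : p.1 + p.2 = m + n
    · right; simp [hχ2, hc]
    · left; simp [hχ2, hc]
  have hχ1supp : ∀ (p : ℕ × ℕ) n, χ1 p n ≠ 0 → n ≤ p.1 + p.2 + m := by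
    intro p n hne
    rw [hχ1] at hne
    by_contra hc
    have : ¬ (p.1 + n = p.2 + m) := by omega
    simp [this] at hne
  have hχ2supp : ∀ (p : ℕ × ℕ) n, χ2 p n ≠ 0 → n ≤ p.1 + p.2 + m := by
    intro p n hne
    rw [hχ2] at hne
    by_contra hc
    have : ¬ (p.1 + p.2 = m + n) := by omega
    simp [this] at hne
  have hχ1H1 : ∀ p : ℕ × ℕ, (∑' n, χ1 p n) ≤ 1 := fun p =>
    tsum_ite_le_one (fun n => p.1 + n = p.2 + m) (fun x y hx hy => by omega)
  have hχ1H2 : ∀ n x, (∑' y, χ1 (x, y) n) ≤ 1 := fun n x =>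
    tsum_ite_le_one (fun y => x + n = y + m) (fun y z hy hz => by omega)
  have hχ1H2' : ∀ n y, (∑' x, χ1 (x, y) n) ≤ 1 := fun n y =>
    tsum_ite_le_one (fun x => x + n = y + m) (fun x z hx hz => by omega)
  have hχ2H1 : ∀ p : ℕ × ℕ, (∑' n, χ2 p n) ≤ 1 := fun p =>
    tsum_ite_le_one (fun n => p.1 + p.2 = m + n) (fun x y hx hy => by omega)
  have hχ2H2 : ∀ n x, (∑' y, χ2 (x, y) n) ≤ 1 := fun n x =>
    tsum_ite_le_one (fun y => x + y = m + n) (fun y z hy hz => by omega)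
  have hχ2H2' : ∀ n y, (∑' x, χ2 (x, y) n) ≤ 1 := fun n y =>
    tsum_ite_le_one (fun x => x + y = m + n) (fun x z hx hz => by omega)
  -- ℓ¹ finiteness
  have hAEv : AE s v ≠ ⊤ := (inHs_iff s v).1 hv
  have hAEh : AE s h ≠ ⊤ := (inHs_iff s h).1 hh
  have ell1fin : ∀ u : ℕ → ℂ, InHs s u → (∑' k, (‖u k‖₊ : ℝ≥0∞)) ≠ ⊤ := by
    intro u hu
    have h1 : (∑' k, (‖u k‖₊ : ℝ≥0∞)) ^ 2 ≠ ⊤ := by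
      refine ne_top_of_le_ne_top ?_ (ell1_sq_le s fun k => (‖u k‖₊ : ℝ≥0∞))
      exact ENNReal.mul_ne_top (by norm_num)
        (ENNReal.mul_ne_top (sig_lt_top s hs) ((inHs_iff s u).1 hu))
    by_contra htop
    rw [htop] at h1
    exact h1 (by simp)
  have hgVfin : (∑' k, gV k) ≠ ⊤ := ell1fin v hv
  have hgHfin : (∑' k, gH k) ≠ ⊤ := ell1fin h hh
  -- summability of the four complex series (fixed n)
  have hprodfin : ∀ (c d : ℕ → ℝ≥0∞), (∑' k, c k) ≠ ⊤ → (∑' k, d k) ≠ ⊤ →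
      (∑' p : ℕ × ℕ, c p.1 * d p.2) ≠ ⊤ := by
    intro c d hc hd
    have : (∑' p : ℕ × ℕ, c p.1 * d p.2) = (∑' k, c k) * (∑' k, d k) := by
      calc (∑' p : ℕ × ℕ, c p.1 * d p.2) = ∑' x, ∑' y, c x * d y := by
            rw [← ENNReal.tsum_prod]
        _ = ∑' x, c x * ∑' y, d y := tsum_congr fun x => ENNReal.tsum_mul_left
        _ = _ := ENNReal.tsum_mul_right
    rw [this]
    exact ENNReal.mul_ne_top hc hd
  have hsum1 : ∀ (u : ℕ → ℂ), InHs s u → ∀ n, Summable (fun p : ℕ × ℕ =>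
      if p.1 + n = p.2 + m then
        (starRingEnd ℂ) (a p.1 p.2 n) * (starRingEnd ℂ) (u p.1) * u p.2 else 0) := by
    intro u hu n
    refine summable_of_ennreal_bound _ (fun p => (‖u p.1‖₊ : ℝ≥0∞) * (‖u p.2‖₊ : ℝ≥0∞))
      (fun p => ?_) (hprodfin _ _ (ell1fin u hu) (ell1fin u hu))
    by_cases hc : p.1 + n = p.2 + m
    · rw [if_pos hc]
      have hb : ‖(starRingEnd ℂ) (a p.1 p.2 n) * (starRingEnd ℂ) (u p.1) * u p.2‖ ≤
          ‖u p.1‖ * ‖u p.2‖ := by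
        rw [norm_mul, norm_mul, RCLike.norm_conj, RCLike.norm_conj]
        have := hbd p.1 p.2 n hc
        nlinarith [mul_le_mul_of_nonneg_right this
          (mul_nonneg (norm_nonneg (u p.1)) (norm_nonneg (u p.2))),
          mul_nonneg (norm_nonneg (u p.1)) (norm_nonneg (u p.2))]
      calc ((‖(starRingEnd ℂ) (a p.1 p.2 n) * (starRingEnd ℂ) (u p.1) * u p.2‖₊ : ℝ≥0∞))
          = ENNReal.ofReal ‖(starRingEnd ℂ) (a p.1 p.2 n) * (starRingEnd ℂ) (u p.1) * u p.2‖ :=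
            (ofReal_norm_eq_coe_nnnorm _).symm
        _ ≤ ENNReal.ofReal (‖u p.1‖ * ‖u p.2‖) := ENNReal.ofReal_le_ofReal hb
        _ = _ := by
            rw [ENNReal.ofReal_mul (norm_nonneg _), ofReal_norm_eq_coe_nnnorm,
              ofReal_norm_eq_coe_nnnorm]
    · rw [if_neg hc]
      simp
  have hsum2 : ∀ (u : ℕ → ℂ), InHs s u → ∀ n, Summable (fun p : ℕ × ℕ =>
      if p.1 + p.2 = m + n then a p.1 n p.2 * u p.1 * u p.2 else 0) := by
    intro u hu n
    refine summable_of_ennreal_bound _ (fun p => (‖u p.1‖₊ : ℝ≥0∞) * (‖u p.2‖₊ : ℝ≥0∞))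
      (fun p => ?_) (hprodfin _ _ (ell1fin u hu) (ell1fin u hu))
    by_cases hc : p.1 + p.2 = m + n
    · rw [if_pos hc]
      have hb : ‖a p.1 n p.2 * u p.1 * u p.2‖ ≤ ‖u p.1‖ * ‖u p.2‖ := by
        rw [norm_mul, norm_mul]
        have := hbd p.1 n p.2 (by omega)
        nlinarith [mul_le_mul_of_nonneg_right this
          (mul_nonneg (norm_nonneg (u p.1)) (norm_nonneg (u p.2))),
          mul_nonneg (norm_nonneg (u p.1)) (norm_nonneg (u p.2))]
      calc ((‖a p.1 n p.2 * u p.1 * u p.2‖₊ : ℝ≥0∞))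
          = ENNReal.ofReal ‖a p.1 n p.2 * u p.1 * u p.2‖ := (ofReal_norm_eq_coe_nnnorm _).symm
        _ ≤ ENNReal.ofReal (‖u p.1‖ * ‖u p.2‖) := ENNReal.ofReal_le_ofReal hb
        _ = _ := by
            rw [ENNReal.ofReal_mul (norm_nonneg _), ofReal_norm_eq_coe_nnnorm,
              ofReal_norm_eq_coe_nnnorm]
    · rw [if_neg hc]
      simp
  -- pointwise bound on the vector field difference
  have hpt : ∀ n, (‖Xa m a v n - Xa m a h n‖₊ : ℝ≥0∞) ≤
      2 * (((∑' p : ℕ × ℕ, χ1 p n * (gD p.1 * gV p.2)) +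
            (∑' p : ℕ × ℕ, χ1 p n * (gH p.1 * gD p.2))) +
           ((∑' p : ℕ × ℕ, χ2 p n * (gD p.1 * gV p.2)) +
            (∑' p : ℕ × ℕ, χ2 p n * (gH p.1 * gD p.2)))) := by
    intro n
    have hdiff : Xa m a v n - Xa m a h n =
        (-2) * Complex.I * (∑' p : ℕ × ℕ,
          ((if p.1 + n = p.2 + m then
              (starRingEnd ℂ) (a p.1 p.2 n) * (starRingEnd ℂ) (v p.1) * v p.2 else 0) -
           (if p.1 + n = p.2 + m then
              (starRingEnd ℂ) (a p.1 p.2 n) * (starRingEnd ℂ) (h p.1) * h p.2 else 0)))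
        - Complex.I * (∑' p : ℕ × ℕ,
          ((if p.1 + p.2 = m + n then a p.1 n p.2 * v p.1 * v p.2 else 0) -
           (if p.1 + p.2 = m + n then a p.1 n p.2 * h p.1 * h p.2 else 0))) := by
      rw [(hsum1 v hv n).tsum_sub (hsum1 h hh n), (hsum2 v hv n).tsum_sub (hsum2 h hh n)]
      simp only [Xa]
      ring
    have hterm1 : ∀ p : ℕ × ℕ,
        (‖(if p.1 + n = p.2 + m then
              (starRingEnd ℂ) (a p.1 p.2 n) * (starRingEnd ℂ) (v p.1) * v p.2 else 0) -
           (if p.1 + n = p.2 + m then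
              (starRingEnd ℂ) (a p.1 p.2 n) * (starRingEnd ℂ) (h p.1) * h p.2 else 0)‖₊ : ℝ≥0∞)
          ≤ χ1 p n * (gD p.1 * gV p.2) + χ1 p n * (gH p.1 * gD p.2) := by
      intro p
      by_cases hc : p.1 + n = p.2 + m
      · rw [if_pos hc, if_pos hc]
        have hone : χ1 p n = 1 := by simp [hχ1, hc]
        rw [hone, one_mul, one_mul]
        have hα : ‖(starRingEnd ℂ) (a p.1 p.2 n)‖ ≤ 1 := by
          rw [RCLike.norm_conj]
          linarith [hbd p.1 p.2 n hc]
        calc (‖(starRingEnd ℂ) (a p.1 p.2 n) * (starRingEnd ℂ) (v p.1) * v p.2 -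
              (starRingEnd ℂ) (a p.1 p.2 n) * (starRingEnd ℂ) (h p.1) * h p.2‖₊ : ℝ≥0∞)
            ≤ (‖(starRingEnd ℂ) (v p.1) - (starRingEnd ℂ) (h p.1)‖₊ : ℝ≥0∞) * (‖v p.2‖₊ : ℝ≥0∞)
              + (‖(starRingEnd ℂ) (h p.1)‖₊ : ℝ≥0∞) * (‖v p.2 - h p.2‖₊ : ℝ≥0∞) :=
              nnnorm_cubic_diff _ _ _ _ _ hα
          _ = gD p.1 * gV p.2 + gH p.1 * gD p.2 := by
              rw [← map_sub, RCLike.nnnorm_conj, RCLike.nnnorm_conj]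
      · rw [if_neg hc, if_neg hc]
        have hzero : χ1 p n = 0 := by simp [hχ1, hc]
        simp [hzero]
    have hterm2 : ∀ p : ℕ × ℕ,
        (‖(if p.1 + p.2 = m + n then a p.1 n p.2 * v p.1 * v p.2 else 0) -
           (if p.1 + p.2 = m + n then a p.1 n p.2 * h p.1 * h p.2 else 0)‖₊ : ℝ≥0∞)
          ≤ χ2 p n * (gD p.1 * gV p.2) + χ2 p n * (gH p.1 * gD p.2) := by
      intro p
      by_cases hc : p.1 + p.2 = m + n
      · rw [if_pos hc, if_pos hc]
        have hone : χ2 p n = 1 := by simp [hχ2, hc]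
        rw [hone, one_mul, one_mul]
        have hα : ‖a p.1 n p.2‖ ≤ 1 := by
          linarith [hbd p.1 n p.2 (by omega)]
        exact nnnorm_cubic_diff _ _ _ _ _ hα
      · rw [if_neg hc, if_neg hc]
        have hzero : χ2 p n = 0 := by simp [hχ2, hc]
        simp [hzero]
    calc (‖Xa m a v n - Xa m a h n‖₊ : ℝ≥0∞)
        ≤ 2 * (‖∑' p : ℕ × ℕ,
            ((if p.1 + n = p.2 + m then
                (starRingEnd ℂ) (a p.1 p.2 n) * (starRingEnd ℂ) (v p.1) * v p.2 else 0) -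
             (if p.1 + n = p.2 + m then
                (starRingEnd ℂ) (a p.1 p.2 n) * (starRingEnd ℂ) (h p.1) * h p.2 else 0))‖₊ : ℝ≥0∞)
          + (‖∑' p : ℕ × ℕ,
            ((if p.1 + p.2 = m + n then a p.1 n p.2 * v p.1 * v p.2 else 0) -
             (if p.1 + p.2 = m + n then a p.1 n p.2 * h p.1 * h p.2 else 0))‖₊ : ℝ≥0∞) := by
          rw [hdiff]
          set A : ℂ := ∑' p : ℕ × ℕ,
            ((if p.1 + n = p.2 + m then
                (starRingEnd ℂ) (a p.1 p.2 n) * (starRingEnd ℂ) (v p.1) * v p.2 else 0) -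
             (if p.1 + n = p.2 + m then
                (starRingEnd ℂ) (a p.1 p.2 n) * (starRingEnd ℂ) (h p.1) * h p.2 else 0)) with hA
          set B : ℂ := ∑' p : ℕ × ℕ,
            ((if p.1 + p.2 = m + n then a p.1 n p.2 * v p.1 * v p.2 else 0) -
             (if p.1 + p.2 = m + n then a p.1 n p.2 * h p.1 * h p.2 else 0)) with hB
          have hreal : ‖(-2) * Complex.I * A - Complex.I * B‖ ≤ 2 * ‖A‖ + ‖B‖ := by
            calc ‖(-2) * Complex.I * A - Complex.I * B‖
                ≤ ‖(-2) * Complex.I * A‖ + ‖Complex.I * B‖ := norm_sub_le _ _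
              _ = 2 * ‖A‖ + ‖B‖ := by
                  rw [norm_mul, norm_mul, norm_mul, Complex.norm_I]
                  simp
          calc (‖(-2) * Complex.I * A - Complex.I * B‖₊ : ℝ≥0∞)
              = ENNReal.ofReal ‖(-2) * Complex.I * A - Complex.I * B‖ :=
                (ofReal_norm_eq_coe_nnnorm _).symm
            _ ≤ ENNReal.ofReal (2 * ‖A‖ + ‖B‖) := ENNReal.ofReal_le_ofReal hreal
            _ = 2 * (‖A‖₊ : ℝ≥0∞) + (‖B‖₊ : ℝ≥0∞) := by
                rw [ENNReal.ofReal_add (by positivity) (norm_nonneg _),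
                  ENNReal.ofReal_mul (by norm_num), ofReal_norm_eq_coe_nnnorm,
                  ofReal_norm_eq_coe_nnnorm]
                norm_num
      _ ≤ 2 * ((∑' p : ℕ × ℕ, χ1 p n * (gD p.1 * gV p.2)) +
            (∑' p : ℕ × ℕ, χ1 p n * (gH p.1 * gD p.2)))
          + ((∑' p : ℕ × ℕ, χ2 p n * (gD p.1 * gV p.2)) +
            (∑' p : ℕ × ℕ, χ2 p n * (gH p.1 * gD p.2))) := by
          refine add_le_add (mul_le_mul_right ?_ 2) ?_
          · calc _ ≤ _ := enorm_tsum_le _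
              _ ≤ ∑' p : ℕ × ℕ, (χ1 p n * (gD p.1 * gV p.2) + χ1 p n * (gH p.1 * gD p.2)) :=
                ENNReal.tsum_le_tsum hterm1
              _ = _ := ENNReal.tsum_add
          · calc _ ≤ _ := enorm_tsum_le _
              _ ≤ ∑' p : ℕ × ℕ, (χ2 p n * (gD p.1 * gV p.2) + χ2 p n * (gH p.1 * gD p.2)) :=
                ENNReal.tsum_le_tsum hterm2
              _ = _ := ENNReal.tsum_add
      _ ≤ _ := by
          set X := (∑' p : ℕ × ℕ, χ1 p n * (gD p.1 * gV p.2)) +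
            (∑' p : ℕ × ℕ, χ1 p n * (gH p.1 * gD p.2)) with hX
          set Y := (∑' p : ℕ × ℕ, χ2 p n * (gD p.1 * gV p.2)) +
            (∑' p : ℕ × ℕ, χ2 p n * (gH p.1 * gD p.2)) with hY
          calc 2 * X + Y ≤ 2 * X + 2 * Y := add_le_add_right (le_mul_of_one_le_left' one_le_two) _
            _ = 2 * (X + Y) := (mul_add 2 X Y).symm
  -- assemble
  have hblock := fun (χ : ℕ × ℕ → ℕ → ℝ≥0∞) hχ01 hsupp H1 H2 H2' (c d : ℕ → ℝ≥0∞) =>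
    blockBound s m K hKpos.le hK χ hχ01 hsupp H1 H2 H2' c d
  have hAED : (∑' k, (wE s k * gD k) ^ 2) = AE s (fun k => v k - h k) := rfl
  have hAEV : (∑' k, (wE s k * gV k) ^ 2) = AE s v := rfl
  have hAEH : (∑' k, (wE s k * gH k) ^ 2) = AE s h := rfl
  calc (∑' n, (wE s n * (‖Xa m a v n - Xa m a h n‖₊ : ℝ≥0∞)) ^ 2)
      ≤ ∑' n, (2 * (wE s n * (((∑' p : ℕ × ℕ, χ1 p n * (gD p.1 * gV p.2)) +
            (∑' p : ℕ × ℕ, χ1 p n * (gH p.1 * gD p.2))) +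
           ((∑' p : ℕ × ℕ, χ2 p n * (gD p.1 * gV p.2)) +
            (∑' p : ℕ × ℕ, χ2 p n * (gH p.1 * gD p.2)))))) ^ 2 := by
        refine ENNReal.tsum_le_tsum fun n => pow_le_pow_left' ?_ 2
        calc wE s n * (‖Xa m a v n - Xa m a h n‖₊ : ℝ≥0∞)
            ≤ wE s n * (2 * (((∑' p : ℕ × ℕ, χ1 p n * (gD p.1 * gV p.2)) +
            (∑' p : ℕ × ℕ, χ1 p n * (gH p.1 * gD p.2))) +
           ((∑' p : ℕ × ℕ, χ2 p n * (gD p.1 * gV p.2)) +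
            (∑' p : ℕ × ℕ, χ2 p n * (gH p.1 * gD p.2))))) := mul_le_mul_right (hpt n) _
          _ = 2 * (wE s n * (((∑' p : ℕ × ℕ, χ1 p n * (gD p.1 * gV p.2)) +
            (∑' p : ℕ × ℕ, χ1 p n * (gH p.1 * gD p.2))) +
           ((∑' p : ℕ × ℕ, χ2 p n * (gD p.1 * gV p.2)) +
            (∑' p : ℕ × ℕ, χ2 p n * (gH p.1 * gD p.2))))) := by ring
    _ ≤ ∑' n, (4 * 9) * ((((wE s n * ∑' p : ℕ × ℕ, χ1 p n * (gD p.1 * gV p.2)) ^ 2 +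
            (wE s n * ∑' p : ℕ × ℕ, χ1 p n * (gH p.1 * gD p.2)) ^ 2) +
           ((wE s n * ∑' p : ℕ × ℕ, χ2 p n * (gD p.1 * gV p.2)) ^ 2 +
            (wE s n * ∑' p : ℕ × ℕ, χ2 p n * (gH p.1 * gD p.2)) ^ 2))) := by
        refine ENNReal.tsum_le_tsum fun n => ?_
        calc (2 * (wE s n * (((∑' p : ℕ × ℕ, χ1 p n * (gD p.1 * gV p.2)) +
            (∑' p : ℕ × ℕ, χ1 p n * (gH p.1 * gD p.2))) +
           ((∑' p : ℕ × ℕ, χ2 p n * (gD p.1 * gV p.2)) +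
            (∑' p : ℕ × ℕ, χ2 p n * (gH p.1 * gD p.2)))))) ^ 2
            = 4 * (wE s n * (((∑' p : ℕ × ℕ, χ1 p n * (gD p.1 * gV p.2)) +
            (∑' p : ℕ × ℕ, χ1 p n * (gH p.1 * gD p.2))) +
           ((∑' p : ℕ × ℕ, χ2 p n * (gD p.1 * gV p.2)) +
            (∑' p : ℕ × ℕ, χ2 p n * (gH p.1 * gD p.2))))) ^ 2 := by ring
          _ ≤ 4 * (9 * (((wE s n * ∑' p : ℕ × ℕ, χ1 p n * (gD p.1 * gV p.2)) ^ 2 +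
            (wE s n * ∑' p : ℕ × ℕ, χ1 p n * (gH p.1 * gD p.2)) ^ 2) +
           ((wE s n * ∑' p : ℕ × ℕ, χ2 p n * (gD p.1 * gV p.2)) ^ 2 +
            (wE s n * ∑' p : ℕ × ℕ, χ2 p n * (gH p.1 * gD p.2)) ^ 2))) := mul_le_mul_right (sq_add4_le _ _ _ _ _) _
          _ = (4 * 9) * (((wE s n * ∑' p : ℕ × ℕ, χ1 p n * (gD p.1 * gV p.2)) ^ 2 +
            (wE s n * ∑' p : ℕ × ℕ, χ1 p n * (gH p.1 * gD p.2)) ^ 2) +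
           ((wE s n * ∑' p : ℕ × ℕ, χ2 p n * (gD p.1 * gV p.2)) ^ 2 +
            (wE s n * ∑' p : ℕ × ℕ, χ2 p n * (gH p.1 * gD p.2)) ^ 2)) := by ring
    _ = (4 * 9) * (((∑' n, (wE s n * ∑' p : ℕ × ℕ, χ1 p n * (gD p.1 * gV p.2)) ^ 2) +
            (∑' n, (wE s n * ∑' p : ℕ × ℕ, χ1 p n * (gH p.1 * gD p.2)) ^ 2)) +
           ((∑' n, (wE s n * ∑' p : ℕ × ℕ, χ2 p n * (gD p.1 * gV p.2)) ^ 2) +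
            (∑' n, (wE s n * ∑' p : ℕ × ℕ, χ2 p n * (gH p.1 * gD p.2)) ^ 2))) := by
        rw [ENNReal.tsum_mul_left]
        congr 1
        rw [ENNReal.tsum_add, ENNReal.tsum_add, ENNReal.tsum_add]
    _ ≤ (4 * 9) * ((24 * KE ^ 2 * Sig * (AE s (fun k => v k - h k) * AE s v) +
            24 * KE ^ 2 * Sig * (AE s h * AE s (fun k => v k - h k))) +
           (24 * KE ^ 2 * Sig * (AE s (fun k => v k - h k) * AE s v) +
            24 * KE ^ 2 * Sig * (AE s h * AE s (fun k => v k - h k)))) := by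
        refine mul_le_mul_right (add_le_add (add_le_add ?_ ?_) (add_le_add ?_ ?_)) _
        · have := hblock χ1 hχ101 hχ1supp hχ1H1 hχ1H2 hχ1H2' gD gV
          rw [hAED, hAEV] at this
          exact this
        · have := hblock χ1 hχ101 hχ1supp hχ1H1 hχ1H2 hχ1H2' gH gD
          rw [hAED, hAEH] at this
          exact this
        · have := hblock χ2 hχ201 hχ2supp hχ2H1 hχ2H2 hχ2H2' gD gV
          rw [hAED, hAEV] at this
          exact this
        · have := hblock χ2 hχ201 hχ2supp hχ2H1 hχ2H2 hχ2H2' gH gD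
          rw [hAED, hAEH] at this
          exact this
    _ = 1728 * KE ^ 2 * Sig * ((AE s v + AE s h) * AE s (fun k => v k - h k)) := by ring
    _ ≤ 3456 * KE ^ 2 * Sig * ((AE s v + AE s h) * AE s (fun k => v k - h k)) := by
        refine mul_le_mul_left (mul_le_mul_left (mul_le_mul_left ?_ _) _) _
        norm_num

lemma hsNormSq_nonneg (s : ℝ) (u : ℕ → ℂ) : 0 ≤ hsNormSq s u :=
  tsum_nonneg fun k => by positivity

lemma sqrt_add_le (x y : ℝ) (hx : 0 ≤ x) (hy : 0 ≤ y) :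
    Real.sqrt (x + y) ≤ Real.sqrt x + Real.sqrt y := by
  rw [← Real.sqrt_sq (by positivity : (0:ℝ) ≤ Real.sqrt x + Real.sqrt y)]
  apply Real.sqrt_le_sqrt
  nlinarith [Real.sq_sqrt hx, Real.sq_sqrt hy, Real.sqrt_nonneg x, Real.sqrt_nonneg y]

lemma inHs_sub (s : ℝ) (v h : ℕ → ℂ) (hv : InHs s v) (hh : InHs s h) :
    InHs s (fun k => v k - h k) := by
  have hsum : Summable fun k : ℕ => 2 * ((1 + (k : ℝ) ^ 2) ^ s * ‖v k‖ ^ 2)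
      + 2 * ((1 + (k : ℝ) ^ 2) ^ s * ‖h k‖ ^ 2) := ((hv.mul_left 2).add (hh.mul_left 2))
  refine hsum.of_nonneg_of_le (fun k => by positivity) (fun k => ?_)
  have h1 : ‖v k - h k‖ ≤ ‖v k‖ + ‖h k‖ := norm_sub_le _ _
  have h2 : ‖v k - h k‖ ^ 2 ≤ 2 * ‖v k‖ ^ 2 + 2 * ‖h k‖ ^ 2 := by
    nlinarith [norm_nonneg (v k - h k), norm_nonneg (v k), norm_nonneg (h k),
      sq_nonneg (‖v k‖ - ‖h k‖)]
  have hW : (0:ℝ) ≤ (1 + (k : ℝ) ^ 2) ^ s := Real.rpow_nonneg (base_nonneg k) _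
  calc (1 + (k : ℝ) ^ 2) ^ s * ‖v k - h k‖ ^ 2
      ≤ (1 + (k : ℝ) ^ 2) ^ s * (2 * ‖v k‖ ^ 2 + 2 * ‖h k‖ ^ 2) :=
        mul_le_mul_of_nonneg_left h2 hW
    _ = 2 * ((1 + (k : ℝ) ^ 2) ^ s * ‖v k‖ ^ 2) + 2 * ((1 + (k : ℝ) ^ 2) ^ s * ‖h k‖ ^ 2) := by
        ring

/-- Real-level Lipschitz estimate. -/
lemma realLevel (m : ℕ) (a : ℕ → ℕ → ℕ → ℂ)
    (hbd : ∀ j l k : ℕ, j + k = l + m → ‖a j l k‖ ≤ 1 / 2)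
    (s : ℝ) (hs : 1 / 2 < s) :
    ∃ C : ℝ, 0 < C ∧ ∀ v h : ℕ → ℂ, InHs s v → InHs s h →
      InHs s (fun n => Xa m a v n - Xa m a h n) ∧
      hsNorm s (fun n => Xa m a v n - Xa m a h n) ≤
        C * (hsNorm s v + hsNorm s h) * hsNorm s (fun n => v n - h n) := by
  obtain ⟨C₀, hC₀top, hC₀⟩ := master m a hbd s hs
  refine ⟨max (Real.sqrt C₀.toReal) 1, lt_of_lt_of_le one_pos (le_max_right _ _), ?_⟩
  intro v h hv hh
  have hΔ : InHs s (fun k => v k - h k) := inHs_sub s v h hv hh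
  have hAEv : AE s v ≠ ⊤ := (inHs_iff s v).1 hv
  have hAEh : AE s h ≠ ⊤ := (inHs_iff s h).1 hh
  have hAEΔ : AE s (fun k => v k - h k) ≠ ⊤ := (inHs_iff s _).1 hΔ
  have hRHS : C₀ * ((AE s v + AE s h) * AE s (fun k => v k - h k)) ≠ ⊤ :=
    ENNReal.mul_ne_top hC₀top
      (ENNReal.mul_ne_top (ENNReal.add_ne_top.2 ⟨hAEv, hAEh⟩) hAEΔ)
  have hmain := hC₀ v h hv hh
  have hAEX : AE s (fun n => Xa m a v n - Xa m a h n) =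
      ∑' n, (wE s n * (‖Xa m a v n - Xa m a h n‖₊ : ℝ≥0∞)) ^ 2 := rfl
  have hXfin : AE s (fun n => Xa m a v n - Xa m a h n) ≠ ⊤ := by
    rw [hAEX]
    exact ne_top_of_le_ne_top hRHS hmain
  have hXin : InHs s (fun n => Xa m a v n - Xa m a h n) := (inHs_iff s _).2 hXfin
  refine ⟨hXin, ?_⟩
  -- pass to real numbers
  have htoReal : hsNormSq s (fun n => Xa m a v n - Xa m a h n) ≤
      C₀.toReal * ((hsNormSq s v + hsNormSq s h) * hsNormSq s (fun n => v n - h n)) := by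
    have h1 : (AE s (fun n => Xa m a v n - Xa m a h n)).toReal ≤
        (C₀ * ((AE s v + AE s h) * AE s (fun k => v k - h k))).toReal := by
      refine ENNReal.toReal_mono hRHS ?_
      rw [hAEX]
      exact hmain
    rw [AE_eq s _ hXin, ENNReal.toReal_ofReal (hsNormSq_nonneg s _)] at h1
    rw [ENNReal.toReal_mul, ENNReal.toReal_mul, ENNReal.toReal_add hAEv hAEh,
      AE_eq s v hv, AE_eq s h hh, AE_eq s _ hΔ,
      ENNReal.toReal_ofReal (hsNormSq_nonneg s _), ENNReal.toReal_ofReal (hsNormSq_nonneg s _),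
      ENNReal.toReal_ofReal (hsNormSq_nonneg s _)] at h1
    exact h1
  -- take square roots
  have hCnn : 0 ≤ C₀.toReal := ENNReal.toReal_nonneg
  calc hsNorm s (fun n => Xa m a v n - Xa m a h n)
      = Real.sqrt (hsNormSq s (fun n => Xa m a v n - Xa m a h n)) := rfl
    _ ≤ Real.sqrt (C₀.toReal * ((hsNormSq s v + hsNormSq s h) * hsNormSq s (fun n => v n - h n))) :=
        Real.sqrt_le_sqrt htoReal
    _ = Real.sqrt C₀.toReal * (Real.sqrt (hsNormSq s v + hsNormSq s h) *
          Real.sqrt (hsNormSq s (fun n => v n - h n))) := by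
        rw [Real.sqrt_mul hCnn, Real.sqrt_mul (add_nonneg (hsNormSq_nonneg s v) (hsNormSq_nonneg s h))]
    _ ≤ Real.sqrt C₀.toReal * ((hsNorm s v + hsNorm s h) * hsNorm s (fun n => v n - h n)) := by
        refine mul_le_mul_of_nonneg_left ?_ (Real.sqrt_nonneg _)
        refine mul_le_mul_of_nonneg_right ?_ (Real.sqrt_nonneg _)
        exact sqrt_add_le _ _ (hsNormSq_nonneg s v) (hsNormSq_nonneg s h)
    _ ≤ max (Real.sqrt C₀.toReal) 1 * (hsNorm s v + hsNorm s h) *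
          hsNorm s (fun n => v n - h n) := by
        rw [mul_assoc]
        refine mul_le_mul_of_nonneg_right (le_max_left _ _) ?_
        have h1 : 0 ≤ hsNorm s v := Real.sqrt_nonneg _
        have h2 : 0 ≤ hsNorm s h := Real.sqrt_nonneg _
        have h3 : 0 ≤ hsNorm s (fun n => v n - h n) := Real.sqrt_nonneg _
        positivity

/-- Quadratic bound and Lipschitz estimate in `H^s₊`, `s > 1/2`, for the
Hamiltonian vector field of a cubic functional with symmetric coefficients
bounded by `1/2`. -/
theorem statement16 (m : ℕ) (a : ℕ → ℕ → ℕ → ℂ)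
    (hsym : ∀ j l k : ℕ, j + k = l + m → a j l k = a k l j)
    (hbd : ∀ j l k : ℕ, j + k = l + m → ‖a j l k‖ ≤ 1 / 2)
    (s : ℝ) (hs : 1 / 2 < s) :
    ∃ C : ℝ, 0 < C ∧ ∀ v h : ℕ → ℂ, InHs s v → InHs s h →
      (InHs s (Xa m a v) ∧ hsNorm s (Xa m a v) ≤ C * hsNorm s v ^ 2) ∧
      hsNorm s (fun n => Xa m a v n - Xa m a h n) ≤
        C * (hsNorm s v + hsNorm s h) * hsNorm s (fun n => v n - h n) := by
  obtain ⟨C, hCpos, hC⟩ := realLevel m a hbd s hs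
  refine ⟨C, hCpos, ?_⟩
  intro v h hv hh
  have h0 : InHs s (fun _ => (0:ℂ)) := by
    have he : (fun k : ℕ => (1 + (k:ℝ)^2)^s * ‖(0:ℂ)‖^2) = fun _ => (0:ℝ) := by
      funext k; simp
    unfold InHs
    rw [he]
    exact summable_zero
  have hXa0 : ∀ n, Xa m a (fun _ => (0:ℂ)) n = 0 := by
    intro n
    simp [Xa]
  constructor
  · obtain ⟨hin, hb⟩ := hC v (fun _ => (0:ℂ)) hv h0
    simp only [hXa0, sub_zero] at hin hb
    have e3 : hsNorm s (fun _ => (0:ℂ)) = 0 := by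
      have h3 : hsNormSq s (fun _ => (0:ℂ)) = 0 := by
        simp [hsNormSq]
      rw [hsNorm, h3, Real.sqrt_zero]
    rw [e3] at hb
    refine ⟨hin, ?_⟩
    calc hsNorm s (Xa m a v) ≤ C * (hsNorm s v + 0) * hsNorm s v := hb
      _ = C * hsNorm s v ^ 2 := by ring
  · exact (hC v h hv hh).2
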